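/- Let A₁,…,A_{n+2} : ℝ → ℝⁿ be C¹ maps and t₀ ∈ ℝ be such that the points A₁(t₀),…,A_{n+2}(t₀) are in general position, and let α₁,…,α_{n+2} be nonzero reals with Σᵢ αᵢ = 0 and Σᵢ αᵢAᵢ(t₀) = 0. Then for every k with 1 ≤ k ≤ n: Σ_{1≤i₁<⋯<i_{k+1}≤n+2} α_{i₁}⋯α_{i_{k+1}} · d/dt[det(⟨A_{i_a}(t) − A_{i₁}(t), A_{i_b}(t) − A_{i₁}(t)⟩)_{2≤a,b≤k+1}] evaluated at t = t₀ equals 0. -/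

import Mathlib

set_option linter.unusedSectionVars false
set_option linter.unnecessarySeqFocus false
set_option maxHeartbeats 1000000

/-- Points `A₁, …, A_m` in `ℝ^d` are in general position if every `d+1` of them are
affinely independent. -/
def InGeneralPosition {d m : ℕ} (A : Fin m → EuclideanSpace ℝ (Fin d)) : Prop :=
  ∀ s : Finset (Fin m), s.card = d + 1 → AffineIndependent ℝ (fun i : ↥s => A i.1)

/-- The Gram determinant of the face with vertex set `s = {i₁ < ⋯ < i_{k+1}}`:
`det(⟨A_{i_a} − A_{i₁}, A_{i_b} − A_{i₁}⟩)_{2 ≤ a,b ≤ k+1}`, which equals `(k!)²` times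
the squared `k`-volume of the corresponding simplex. -/
noncomputable def gramFace {d m : ℕ} (A : Fin m → EuclideanSpace ℝ (Fin d))
    (s : Finset (Fin m)) : ℝ :=
  if h : s.Nonempty then
    Matrix.det (Matrix.of fun (a b : ↥(s.erase (s.min' h))) =>
      (inner ℝ (A a.1 - A (s.min' h)) (A b.1 - A (s.min' h)) : ℝ))
  else 0

open Matrix Finset

namespace GramAux

variable {R : Type*} [CommRing R]
variable {p : ℕ} {κ : Type*} [Fintype κ] [LinearOrder κ]

theorem det_mul_expand (X : Matrix (Fin p) κ R) (Y : Matrix κ (Fin p) R) :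
    (X * Y).det = ∑ g : Fin p → κ, (X.submatrix id g).det * ∏ i, Y (g i) i := by
  have h1 : (X * Y).det
      = ∑ g : Fin p → κ, ∑ σ : Equiv.Perm (Fin p),
          Equiv.Perm.sign σ • ∏ i, X (σ i) (g i) * Y (g i) i := by
    simp only [Matrix.det_apply, Matrix.mul_apply, Finset.prod_univ_sum,
      Finset.smul_sum, Fintype.piFinset_univ]
    rw [Finset.sum_comm]
  rw [h1]
  refine Finset.sum_congr rfl fun g _ => ?_
  rw [Matrix.det_apply, Finset.sum_mul]
  refine Finset.sum_congr rfl fun σ _ => ?_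
  rw [Finset.prod_mul_distrib, smul_mul_assoc]
  rfl


theorem card_image_univ {g : Fin p → κ} (hg : Function.Injective g) :
    (Finset.image g Finset.univ).card = p := by
  rw [Finset.card_image_of_injective _ hg, Finset.card_univ, Fintype.card_fin]

noncomputable def permOf (g : Fin p → κ) (hg : Function.Injective g) : Equiv.Perm (Fin p) :=
  Equiv.ofBijective
    (fun a => ((Finset.image g Finset.univ).orderIsoOfFin (card_image_univ hg)).symm
        ⟨g a, by simp [Finset.mem_image]⟩)
    (Finite.injective_iff_bijective.mp fun a b hab => by
      have h2 := congrArg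
        (fun z => (((Finset.image g Finset.univ).orderIsoOfFin (card_image_univ hg)) z : κ)) hab
      simpa using hg (by simpa using h2))

theorem permOf_spec (g : Fin p → κ) (hg : Function.Injective g) (a : Fin p) :
    (Finset.image g Finset.univ).orderEmbOfFin (card_image_univ hg) (permOf g hg a) = g a := by
  have : permOf g hg a
      = ((Finset.image g Finset.univ).orderIsoOfFin (card_image_univ hg)).symm
          ⟨g a, by simp [Finset.mem_image]⟩ := rfl
  rw [← Finset.coe_orderIsoOfFin_apply, this]
  simp

theorem orderEmbOfFin_congr {s t : Finset κ} (hst : s = t) (hs : s.card = p) (i : Fin p) :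
    s.orderEmbOfFin hs i = t.orderEmbOfFin (hst ▸ hs) i := by subst hst; rfl

theorem sum_functions_eq_sum_subsets (T : (Fin p → κ) → R)
    (hT : ∀ g : Fin p → κ, ¬ Function.Injective g → T g = 0) :
    ∑ g : Fin p → κ, T g
      = ∑ s ∈ (Finset.powersetCard p (Finset.univ : Finset κ)).attach,
          ∑ π : Equiv.Perm (Fin p),
            T (fun i => s.1.orderEmbOfFin ((Finset.mem_powersetCard.mp s.2).2) (π i)) := by
  classical
  rw [← Finset.sum_filter_of_ne (s := Finset.univ) (p := fun g : Fin p → κ => Function.Injective g)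
    (fun g _ hg => by by_contra h; exact hg (hT g h))]
  rw [← Finset.sum_product' (s := (Finset.powersetCard p (Finset.univ : Finset κ)).attach)
      (t := (Finset.univ : Finset (Equiv.Perm (Fin p))))]
  refine Finset.sum_bij'
    (i := fun g hg => (⟨Finset.image g Finset.univ,
        Finset.mem_powersetCard.mpr ⟨Finset.subset_univ _, card_image_univ ((Finset.mem_filter.mp hg).2)⟩⟩,
        permOf g (Finset.mem_filter.mp hg).2))
    (j := fun x _ => fun i => x.1.1.orderEmbOfFin ((Finset.mem_powersetCard.mp x.1.2).2) (x.2 i))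
    ?_ ?_ ?_ ?_ ?_
  · intro g hg
    exact Finset.mem_product.mpr ⟨Finset.mem_attach _ _, Finset.mem_univ _⟩
  · intro x hx
    refine Finset.mem_filter.mpr ⟨Finset.mem_univ _, ?_⟩
    exact ((Finset.orderEmbOfFin _ _).injective).comp x.2.injective
  · -- left inverse : j (i g) = g
    intro g hg
    funext a
    exact permOf_spec g (Finset.mem_filter.mp hg).2 a
  · -- right inverse : i (j x) = x
    intro x hx
    obtain ⟨s, π⟩ := x
    have hinj : Function.Injective
        (fun i => s.1.orderEmbOfFin ((Finset.mem_powersetCard.mp s.2).2) (π i)) :=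
      ((Finset.orderEmbOfFin _ _).injective).comp π.injective
    have himg : Finset.image
        (fun i => s.1.orderEmbOfFin ((Finset.mem_powersetCard.mp s.2).2) (π i)) Finset.univ
        = s.1 := by
      apply Finset.coe_injective
      rw [Finset.coe_image, Finset.coe_univ, Set.image_univ]
      have h2 : Set.range (fun i => s.1.orderEmbOfFin ((Finset.mem_powersetCard.mp s.2).2) (π i))
          = Set.range (s.1.orderEmbOfFin ((Finset.mem_powersetCard.mp s.2).2)) :=
        Function.Surjective.range_comp π.surjective _
      rw [h2, Finset.range_orderEmbOfFin]
    refine Prod.ext (Subtype.ext himg) ?_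
    refine Equiv.ext fun a => ?_
    dsimp only
    apply (s.1.orderEmbOfFin ((Finset.mem_powersetCard.mp s.2).2)).injective
    have h3 := permOf_spec _ hinj a
    rw [orderEmbOfFin_congr himg (card_image_univ hinj)] at h3
    exact h3
  · intro g hg
    have h4 : ∀ i, (Finset.image g Finset.univ).orderEmbOfFin
        (card_image_univ (Finset.mem_filter.mp hg).2) (permOf g (Finset.mem_filter.mp hg).2 i)
        = g i := permOf_spec g (Finset.mem_filter.mp hg).2
    exact (congrArg T (funext h4)).symm


theorem cauchyBinet (X : Matrix (Fin p) κ R) (Y : Matrix κ (Fin p) R) :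
    (X * Y).det
      = ∑ s ∈ (Finset.powersetCard p (Finset.univ : Finset κ)).attach,
          (X.submatrix id (s.1.orderEmbOfFin (Finset.mem_powersetCard.mp s.2).2)).det
            * (Y.submatrix (s.1.orderEmbOfFin (Finset.mem_powersetCard.mp s.2).2) id).det := by
  classical
  rw [det_mul_expand]
  rw [sum_functions_eq_sum_subsets (T := fun g => (X.submatrix id g).det * ∏ i, Y (g i) i)
    (fun g hg => by
      obtain ⟨a, b, hab, hne⟩ := Function.not_injective_iff.mp hg
      show (X.submatrix id g).det * ∏ i, Y (g i) i = 0
      rw [Matrix.det_zero_of_column_eq hne (fun k => by simp [hab]), zero_mul])]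
  refine Finset.sum_congr rfl fun s _ => ?_
  have key : ∀ π : Equiv.Perm (Fin p),
      (X.submatrix id (fun i => s.1.orderEmbOfFin (Finset.mem_powersetCard.mp s.2).2 (π i))).det
        = Equiv.Perm.sign π
            • (X.submatrix id (s.1.orderEmbOfFin (Finset.mem_powersetCard.mp s.2).2)).det := by
    intro π
    have h5 : X.submatrix id (fun i => s.1.orderEmbOfFin (Finset.mem_powersetCard.mp s.2).2 (π i))
        = (X.submatrix id (s.1.orderEmbOfFin (Finset.mem_powersetCard.mp s.2).2)).submatrix id π := by
      rw [Matrix.submatrix_submatrix]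
      rfl
    rw [h5, Matrix.det_permute']
    simp [Units.smul_def]
  calc
    ∑ π : Equiv.Perm (Fin p),
        (X.submatrix id (fun i => s.1.orderEmbOfFin (Finset.mem_powersetCard.mp s.2).2 (π i))).det
          * ∏ i, Y (s.1.orderEmbOfFin (Finset.mem_powersetCard.mp s.2).2 (π i)) i
      = ∑ π : Equiv.Perm (Fin p),
          (Equiv.Perm.sign π
              • ∏ i, (Y.submatrix (s.1.orderEmbOfFin (Finset.mem_powersetCard.mp s.2).2) id) (π i) i)
            * (X.submatrix id (s.1.orderEmbOfFin (Finset.mem_powersetCard.mp s.2).2)).det := by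
        refine Finset.sum_congr rfl fun π _ => ?_
        rw [key π]
        simp only [Units.smul_def, zsmul_eq_mul, Matrix.submatrix_apply, id_eq]
        ring
    _ = _ := by
        rw [← Finset.sum_mul, ← Matrix.det_apply, mul_comm]


theorem image_orderEmbOfFin_univ {s : Finset κ} (h : s.card = p) :
    Finset.image (s.orderEmbOfFin h) Finset.univ = s := by
  apply Finset.coe_injective
  rw [Finset.coe_image, Finset.coe_univ, Set.image_univ, Finset.range_orderEmbOfFin]

theorem prod_comp_orderEmbOfFin {s : Finset κ} (h : s.card = p) (f : κ → R) :
    ∏ b : Fin p, f (s.orderEmbOfFin h b) = ∏ j ∈ s, f j := by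
  refine Finset.prod_nbij (fun b => s.orderEmbOfFin h b)
    (fun b _ => Finset.orderEmbOfFin_mem s h b)
    (fun a _ b _ hab => (s.orderEmbOfFin h).injective hab) ?_ (fun _ _ => rfl)
  intro j hj
  have hr : j ∈ Set.range (s.orderEmbOfFin h) := by
    rw [Finset.range_orderEmbOfFin]; exact hj
  obtain ⟨b, hb⟩ := hr
  exact ⟨b, by simp, hb⟩

/-- The mixed minor `det (B restricted to rows r, columns s)`. -/
noncomputable def Mix {q m p : ℕ} (B : Matrix (Fin q) (Fin m) R)
    (r : {x // x ∈ Finset.powersetCard p (Finset.univ : Finset (Fin q))})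
    (s : {x // x ∈ Finset.powersetCard p (Finset.univ : Finset (Fin m))}) : R :=
  (Matrix.of fun a b : Fin p =>
    B (r.1.orderEmbOfFin (Finset.mem_powersetCard.mp r.2).2 a)
      (s.1.orderEmbOfFin (Finset.mem_powersetCard.mp s.2).2 b)).det

theorem key_lhs {m q p : ℕ} (B : Matrix (Fin q) (Fin m) R)
    (s : {x // x ∈ Finset.powersetCard p (Finset.univ : Finset (Fin m))}) :
    (Matrix.of fun a b : ↥s.1 => ∑ x, B x a.1 * B x b.1).det
      = ∑ r ∈ (Finset.powersetCard p (Finset.univ : Finset (Fin q))).attach,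
          Mix B r s * Mix B r s := by
  classical
  have hs := (Finset.mem_powersetCard.mp s.2).2
  have h1 : (Matrix.of fun a b : ↥s.1 => ∑ x, B x a.1 * B x b.1).det
      = ((B.submatrix id (s.1.orderEmbOfFin hs))ᵀ * (B.submatrix id (s.1.orderEmbOfFin hs))).det := by
    rw [← Matrix.det_submatrix_equiv_self (s.1.orderIsoOfFin hs).toEquiv
      (Matrix.of fun a b : ↥s.1 => ∑ x, B x a.1 * B x b.1)]
    refine congrArg Matrix.det ?_
    ext a b
    simp [Matrix.mul_apply, Finset.coe_orderIsoOfFin_apply]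
  rw [h1, cauchyBinet]
  refine Finset.sum_congr rfl fun r _ => ?_
  have hr := (Finset.mem_powersetCard.mp r.2).2
  have h2 : (B.submatrix id (s.1.orderEmbOfFin hs))ᵀ.submatrix id (r.1.orderEmbOfFin hr)
      = (Matrix.of fun a b : Fin p =>
          B (r.1.orderEmbOfFin hr a) (s.1.orderEmbOfFin hs b))ᵀ := by
    ext a b; simp
  have h3 : (B.submatrix id (s.1.orderEmbOfFin hs)).submatrix (r.1.orderEmbOfFin hr) id
      = Matrix.of fun a b : Fin p =>
          B (r.1.orderEmbOfFin hr a) (s.1.orderEmbOfFin hs b) := by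
    ext a b; simp
  rw [h2, h3, Matrix.det_transpose]
  rfl

theorem key_rhs {m q p : ℕ} (w : Fin m → R) (B : Matrix (Fin q) (Fin m) R)
    (r : {x // x ∈ Finset.powersetCard p (Finset.univ : Finset (Fin q))}) :
    (Matrix.of fun a b : Fin p =>
        ∑ j, w j * B (r.1.orderEmbOfFin (Finset.mem_powersetCard.mp r.2).2 a) j
          * B (r.1.orderEmbOfFin (Finset.mem_powersetCard.mp r.2).2 b) j).det
      = ∑ s ∈ (Finset.powersetCard p (Finset.univ : Finset (Fin m))).attach,
          (∏ j ∈ s.1, w j) * (Mix B r s * Mix B r s) := by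
  classical
  have hr := (Finset.mem_powersetCard.mp r.2).2
  have h1 : (Matrix.of fun a b : Fin p =>
        ∑ j, w j * B (r.1.orderEmbOfFin hr a) j * B (r.1.orderEmbOfFin hr b) j)
      = (Matrix.of fun (a : Fin p) (j : Fin m) => w j * B (r.1.orderEmbOfFin hr a) j)
          * (Matrix.of fun (j : Fin m) (b : Fin p) => B (r.1.orderEmbOfFin hr b) j) := by
    ext a b
    simp [Matrix.mul_apply]
  rw [h1, cauchyBinet]
  refine Finset.sum_congr rfl fun s _ => ?_
  have hs := (Finset.mem_powersetCard.mp s.2).2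
  have h2 : (Matrix.of fun (a : Fin p) (j : Fin m) =>
        w j * B (r.1.orderEmbOfFin hr a) j).submatrix id (s.1.orderEmbOfFin hs)
      = Matrix.of fun a b : Fin p => w (s.1.orderEmbOfFin hs b)
          * (Matrix.of fun a b : Fin p =>
              B (r.1.orderEmbOfFin hr a) (s.1.orderEmbOfFin hs b)) a b := by
    ext a b; simp
  have h3 : (Matrix.of fun (j : Fin m) (b : Fin p) =>
        B (r.1.orderEmbOfFin hr b) j).submatrix (s.1.orderEmbOfFin hs) id
      = (Matrix.of fun a b : Fin p =>
          B (r.1.orderEmbOfFin hr a) (s.1.orderEmbOfFin hs b))ᵀ := by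
    ext a b; simp
  rw [h2, h3, Matrix.det_mul_row, Matrix.det_transpose,
    prod_comp_orderEmbOfFin hs w, mul_assoc]
  rfl

theorem key_identity {m q p : ℕ} (w : Fin m → R) (B : Matrix (Fin q) (Fin m) R) :
    ∑ s ∈ (Finset.powersetCard p (Finset.univ : Finset (Fin m))).attach,
      (∏ j ∈ s.1, w j) * (Matrix.of fun a b : ↥s.1 => ∑ x, B x a.1 * B x b.1).det
    = ∑ r ∈ (Finset.powersetCard p (Finset.univ : Finset (Fin q))).attach,
      (Matrix.of fun a b : Fin p =>
        ∑ j, w j * B (r.1.orderEmbOfFin (Finset.mem_powersetCard.mp r.2).2 a) j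
          * B (r.1.orderEmbOfFin (Finset.mem_powersetCard.mp r.2).2 b) j).det := by
  classical
  calc ∑ s ∈ (Finset.powersetCard p (Finset.univ : Finset (Fin m))).attach,
      (∏ j ∈ s.1, w j) * (Matrix.of fun a b : ↥s.1 => ∑ x, B x a.1 * B x b.1).det
      = ∑ s ∈ (Finset.powersetCard p (Finset.univ : Finset (Fin m))).attach,
          ∑ r ∈ (Finset.powersetCard p (Finset.univ : Finset (Fin q))).attach,
            (∏ j ∈ s.1, w j) * (Mix B r s * Mix B r s) := by
        refine Finset.sum_congr rfl fun s _ => ?_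
        rw [key_lhs B s, Finset.mul_sum]
    _ = ∑ r ∈ (Finset.powersetCard p (Finset.univ : Finset (Fin q))).attach,
          ∑ s ∈ (Finset.powersetCard p (Finset.univ : Finset (Fin m))).attach,
            (∏ j ∈ s.1, w j) * (Mix B r s * Mix B r s) := Finset.sum_comm
    _ = _ := by
        refine Finset.sum_congr rfl fun r _ => ?_
        rw [← key_rhs w B r]


theorem gram_hat_sub {ι : Type*} [Fintype ι] [DecidableEq ι] {d : ℕ}
    (u : Sum Unit ι → Fin d → ℝ) :
    Matrix.det (Matrix.of fun a b : Sum Unit ι => (1:ℝ) + ∑ x, u a x * u b x)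
      - Matrix.det (Matrix.of fun a b : Sum Unit ι => ∑ x, u a x * u b x)
    = Matrix.det (Matrix.of fun a b : ι =>
        ∑ x, (u (Sum.inr a) x - u (Sum.inl ()) x) * (u (Sum.inr b) x - u (Sum.inl ()) x)) := by
  classical
  set u₀ : Fin d → ℝ := u (Sum.inl ()) with hu₀
  -- the sheared coordinate matrix, with hat-entry e
  set C : ℝ → Matrix (Sum Unit (Fin d)) (Sum Unit ι) ℝ :=
    fun e => Matrix.of fun x j => Sum.elim (fun _ => e) (fun i => u j i) x with hC
  set P : Matrix (Sum Unit ι) (Sum Unit ι) ℝ :=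
    Matrix.fromBlocks 1 (Matrix.of fun _ _ => (-1:ℝ)) 0 1 with hP
  have hdetP : P.det = 1 := by
    rw [hP, Matrix.det_fromBlocks_zero₂₁]; simp
  -- the canonical sheared Gram matrix
  set F : ℝ → Matrix (Sum Unit ι) (Sum Unit ι) ℝ := fun e =>
    Matrix.fromBlocks
      (Matrix.of fun _ _ : Unit => e * e + ∑ x, u₀ x * u₀ x)
      (Matrix.of fun _ b => ∑ x, u₀ x * (u (Sum.inr b) x - u₀ x))
      (Matrix.of fun a _ => ∑ x, (u (Sum.inr a) x - u₀ x) * u₀ x)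
      (Matrix.of fun a b => ∑ x, (u (Sum.inr a) x - u₀ x) * (u (Sum.inr b) x - u₀ x)) with hF
  have hCP : ∀ e, C e * P = Matrix.of fun x j =>
      Sum.elim (fun _ => Sum.elim (fun _ => e) (fun i => u₀ i) x)
        (fun b => Sum.elim (fun _ => (0:ℝ)) (fun i => u (Sum.inr b) i - u₀ i) x) j := by
    intro e
    ext x j
    rcases j with _ | b <;> rcases x with _ | i <;>
      simp [hC, hP, Matrix.mul_apply, Fintype.sum_sum_type, Matrix.one_apply, hu₀] <;>
      ring
  have hdet : ∀ e, Matrix.det (Matrix.of fun a b : Sum Unit ι => e * e + ∑ x, u a x * u b x)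
      = (F e).det := by
    intro e
    have h1 : Matrix.of (fun a b : Sum Unit ι => e * e + ∑ x, u a x * u b x)
        = (C e)ᵀ * (C e) := by
      ext a b
      simp [hC, Matrix.mul_apply, Fintype.sum_sum_type]
    have h2 : (C e * P)ᵀ * (C e * P) = F e := by
      rw [hCP e]
      ext a b
      rcases a with _ | a <;> rcases b with _ | b <;>
        simp [hF, Matrix.mul_apply, Fintype.sum_sum_type]
    have h3 : ((C e * P)ᵀ * (C e * P)).det = ((C e)ᵀ * (C e)).det := by
      rw [Matrix.transpose_mul, Matrix.mul_assoc, ← Matrix.mul_assoc ((C e)ᵀ)]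
      simp [Matrix.det_mul, Matrix.det_transpose, hdetP]
    rw [h1, ← h3, h2]
  have e1 : Matrix.det (Matrix.of fun a b : Sum Unit ι => (1:ℝ) + ∑ x, u a x * u b x)
      = (F 1).det := by
    rw [← hdet 1]; norm_num
  have e0 : Matrix.det (Matrix.of fun a b : Sum Unit ι => ∑ x, u a x * u b x)
      = (F 0).det := by
    rw [← hdet 0]; norm_num
  -- F 1 = updateRow of F 0
  have hup : F 1 = (F 0).updateRow (Sum.inl ())
      ((F 0) (Sum.inl ()) + Pi.single (Sum.inl ()) 1) := by
    ext a b
    rcases a with _ | a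
    · rw [Matrix.updateRow_self]
      rcases b with _ | b <;>
        simp [hF, Pi.single_apply] <;> ring
    · rw [Matrix.updateRow_ne (by simp)]
      rcases b with _ | b <;> simp [hF]
  have hsingle : (F 0).updateRow (Sum.inl ()) (Pi.single (Sum.inl ()) 1)
      = Matrix.fromBlocks 1 0
          (Matrix.of fun a _ => ∑ x, (u (Sum.inr a) x - u₀ x) * u₀ x)
          (Matrix.of fun a b => ∑ x, (u (Sum.inr a) x - u₀ x) * (u (Sum.inr b) x - u₀ x)) := by
    ext a b
    rcases a with _ | a
    · rw [Matrix.updateRow_self]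
      rcases b with _ | b <;> simp [Pi.single_apply, Matrix.one_apply]
    · rw [Matrix.updateRow_ne (by simp)]
      rcases b with _ | b <;> simp [hF]
  rw [e1, e0, hup, Matrix.det_updateRow_add, Matrix.updateRow_eq_self, hsingle,
    Matrix.det_fromBlocks_zero₁₂]
  simp

theorem gramFace_eq {d m : ℕ} (A : Fin m → EuclideanSpace ℝ (Fin d))
    (s : Finset (Fin m)) (h : s.Nonempty) :
    gramFace A s =
      Matrix.det (Matrix.of fun a b : ↥s => (1:ℝ) + ∑ x, A a.1 x * A b.1 x)
      - Matrix.det (Matrix.of fun a b : ↥s => ∑ x, A a.1 x * A b.1 x) := by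
  classical
  set i₀ := s.min' h with hi₀def
  have hi₀ : i₀ ∈ s := s.min'_mem h
  let e : Sum Unit ↥(s.erase i₀) ≃ ↥s :=
    { toFun := Sum.elim (fun _ => ⟨i₀, hi₀⟩) (fun a => ⟨a.1, Finset.mem_of_mem_erase a.2⟩)
      invFun := fun j => if hj : j.1 = i₀ then Sum.inl ()
        else Sum.inr ⟨j.1, Finset.mem_erase.mpr ⟨hj, j.2⟩⟩
      left_inv := by
        rintro (_ | a)
        · simp
        · have ha := (Finset.mem_erase.mp a.2).1
          simp [ha]
      right_inv := by
        intro j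
        by_cases hj : j.1 = i₀
        · simp [hj]
          exact Subtype.ext hj.symm
        · simp [hj] }
  have key := gram_hat_sub (ι := ↥(s.erase i₀)) (d := d) (fun z x => A ((e z) : Fin m) x)
  have h1 : Matrix.det (Matrix.of fun a b : ↥s => (1:ℝ) + ∑ x, A a.1 x * A b.1 x)
      = Matrix.det (Matrix.of fun a b : Sum Unit ↥(s.erase i₀) =>
          (1:ℝ) + ∑ x, A ((e a) : Fin m) x * A ((e b) : Fin m) x) := by
    rw [← Matrix.det_submatrix_equiv_self e
      (Matrix.of fun a b : ↥s => (1:ℝ) + ∑ x, A a.1 x * A b.1 x)]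
    rfl
  have h0 : Matrix.det (Matrix.of fun a b : ↥s => ∑ x, A a.1 x * A b.1 x)
      = Matrix.det (Matrix.of fun a b : Sum Unit ↥(s.erase i₀) =>
          ∑ x, A ((e a) : Fin m) x * A ((e b) : Fin m) x) := by
    rw [← Matrix.det_submatrix_equiv_self e
      (Matrix.of fun a b : ↥s => ∑ x, A a.1 x * A b.1 x)]
    rfl
  rw [h1, h0, key]
  rw [gramFace, dif_pos h]
  congr 1
  ext a b
  rw [Matrix.of_apply, Matrix.of_apply, PiLp.inner_apply]
  refine Finset.sum_congr rfl fun x _ => ?_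
  show _ = (A a.1 x - A (s.min' h) x) * (A b.1 x - A (s.min' h) x)
  simp [mul_comm]


theorem differentiableAt_det {ι : Type*} [Fintype ι] [DecidableEq ι]
    (M : ℝ → Matrix ι ι ℝ) {t₀ : ℝ}
    (hd : ∀ i j, DifferentiableAt ℝ (fun t => M t i j) t₀) :
    DifferentiableAt ℝ (fun t => (M t).det) t₀ := by
  have hfun : (fun t => (M t).det)
      = fun t => ∑ σ : Equiv.Perm ι, ((Equiv.Perm.sign σ : ℤ) : ℝ) * ∏ i, M t (σ i) i :=
    funext fun t => Matrix.det_apply' (M t)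
  rw [hfun]
  refine DifferentiableAt.fun_sum fun σ _ => DifferentiableAt.const_mul ?_ _
  exact (HasDerivAt.fun_finsetProd (fun i _ => (hd (σ i) i).hasDerivAt)).differentiableAt

theorem hasDerivAt_det_special {ι : Type*} [Fintype ι] [DecidableEq ι]
    (M : ℝ → Matrix ι ι ℝ) (M' : Matrix ι ι ℝ) (t₀ : ℝ)
    (hd : ∀ i j, HasDerivAt (fun t => M t i j) (M' i j) t₀)
    (istar : ι) (hrow : ∀ j, M t₀ istar j = 0) (hcol : ∀ i, M t₀ i istar = 0)
    (hd0 : M' istar istar = 0) :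
    HasDerivAt (fun t => (M t).det) 0 t₀ := by
  have hfun : (fun t => (M t).det)
      = fun t => ∑ σ : Equiv.Perm ι, ((Equiv.Perm.sign σ : ℤ) : ℝ) * ∏ i, M t (σ i) i :=
    funext fun t => Matrix.det_apply' (M t)
  rw [hfun]
  have hterm : ∀ σ : Equiv.Perm ι,
      HasDerivAt (fun t => ((Equiv.Perm.sign σ : ℤ) : ℝ) * ∏ i, M t (σ i) i) 0 t₀ := by
    intro σ
    have hp : HasDerivAt (fun t => ∏ i, M t (σ i) i)
        (∑ i, (∏ j ∈ Finset.univ.erase i, M t₀ (σ j) j) • M' (σ i) i) t₀ :=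
      HasDerivAt.fun_finsetProd (fun i _ => hd (σ i) i)
    have hz : (∑ i, (∏ j ∈ Finset.univ.erase i, M t₀ (σ j) j) • M' (σ i) i) = 0 := by
      refine Finset.sum_eq_zero fun i _ => ?_
      by_cases hi : i = σ⁻¹ istar
      · subst hi
        by_cases hfix : σ⁻¹ istar = istar
        · have h5 : σ (σ⁻¹ istar) = istar := Equiv.apply_symm_apply σ istar
          rw [h5, hfix, hd0, smul_zero]
        · have hmem : istar ∈ Finset.univ.erase (σ⁻¹ istar) :=
            Finset.mem_erase.mpr ⟨fun hh => hfix hh.symm, Finset.mem_univ _⟩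
          have hzero : M t₀ (σ istar) istar = 0 := hcol (σ istar)
          rw [Finset.prod_eq_zero (f := fun j => M t₀ (σ j) j) hmem hzero, zero_smul]
      · have hmem : σ⁻¹ istar ∈ Finset.univ.erase i :=
          Finset.mem_erase.mpr ⟨fun hh => hi hh.symm, Finset.mem_univ _⟩
        have hzero : M t₀ (σ (σ⁻¹ istar)) (σ⁻¹ istar) = 0 := by
          rw [show σ (σ⁻¹ istar) = istar from Equiv.apply_symm_apply σ istar]
          exact hrow _
        rw [Finset.prod_eq_zero (f := fun j => M t₀ (σ j) j) hmem hzero, zero_smul]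
    rw [hz] at hp
    simpa using hp.const_mul ((Equiv.Perm.sign σ : ℤ) : ℝ)
  have hsum := HasDerivAt.fun_sum (u := Finset.univ)
    (A := fun σ t => ((Equiv.Perm.sign σ : ℤ) : ℝ) * ∏ i, M t (σ i) i)
    (A' := fun _ => (0:ℝ)) (fun σ _ => hterm σ)
  simpa using hsum


end GramAux

/-- For a `C¹` motion of a degenerate `(n+1)`-simplex in `ℝⁿ`, the `α`-weighted sum over all
`k`-faces of the derivatives of their Gram determinants (squared `k`-volumes) vanishes. -/
theorem weighted_sum_deriv_gram_faces_eq_zero {n : ℕ}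
    (A : Fin (n + 2) → ℝ → EuclideanSpace ℝ (Fin n))
    (hA : ∀ i, ContDiff ℝ 1 (A i)) (t₀ : ℝ)
    (hgp : InGeneralPosition (fun i => A i t₀))
    (α : Fin (n + 2) → ℝ) (hα : ∀ i, α i ≠ 0)
    (hsum : ∑ i, α i = 0) (hsum2 : ∑ i, α i • A i t₀ = 0)
    (k : ℕ) (hk1 : 1 ≤ k) (hkn : k ≤ n) :
    ∑ s ∈ Finset.powersetCard (k + 1) (Finset.univ : Finset (Fin (n + 2))),
      (∏ i ∈ s, α i) * deriv (fun t : ℝ => gramFace (fun i => A i t) s) t₀ = 0 := by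
  classical
  -- hatted and flattened coordinate matrices
  set Bh : ℝ → Matrix (Fin (n+1)) (Fin (n+2)) ℝ :=
    fun t => Matrix.of fun x j => Fin.cases (1:ℝ) (fun i => A j t i) x with hBhdef
  set Bt : ℝ → Matrix (Fin (n+1)) (Fin (n+2)) ℝ :=
    fun t => Matrix.of fun x j => Fin.cases (0:ℝ) (fun i => A j t i) x with hBtdef
  have hBh0 : ∀ t j, Bh t 0 j = 1 := fun t j => by simp [hBhdef]
  have hBhs : ∀ t j (i : Fin n), Bh t i.succ j = A j t i := fun t j i => by simp [hBhdef]
  have hBt0 : ∀ t j, Bt t 0 j = 0 := fun t j => by simp [hBtdef]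
  have hBts : ∀ t j (i : Fin n), Bt t i.succ j = A j t i := fun t j i => by simp [hBtdef]
  -- differentiability of the coordinates
  have hAd : ∀ j i, Differentiable ℝ (fun t => A j t i) := fun j i =>
    (EuclideanSpace.proj i : EuclideanSpace ℝ (Fin n) →L[ℝ] ℝ).differentiable.comp
      ((hA j).differentiable one_ne_zero)
  have hBhd : ∀ x j, Differentiable ℝ (fun t => Bh t x j) := by
    intro x j
    refine Fin.cases ?_ ?_ x
    · have he : (fun t => Bh t 0 j) = fun _ => (1:ℝ) := funext fun t => hBh0 t j
      rw [he]; exact differentiable_const _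
    · intro i
      have he : (fun t => Bh t i.succ j) = fun t => A j t i := funext fun t => hBhs t j i
      rw [he]; exact hAd j i
  have hBtd : ∀ x j, Differentiable ℝ (fun t => Bt t x j) := by
    intro x j
    refine Fin.cases ?_ ?_ x
    · have he : (fun t => Bt t 0 j) = fun _ => (0:ℝ) := funext fun t => hBt0 t j
      rw [he]; exact differentiable_const _
    · intro i
      have he : (fun t => Bt t i.succ j) = fun t => A j t i := funext fun t => hBts t j i
      rw [he]; exact hAd j i
  -- the linear relations at t₀
  have hsum2' : ∀ x : Fin n, ∑ j, α j * A j t₀ x = 0 := by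
    intro x
    have h := congrArg (fun v : EuclideanSpace ℝ (Fin n) =>
      (EuclideanSpace.proj x : EuclideanSpace ℝ (Fin n) →L[ℝ] ℝ) v) hsum2
    simpa [map_sum, smul_eq_mul] using h
  have hval : ∀ y : Fin (n+1), (∑ j, α j * Bh t₀ y j) = 0 := by
    refine Fin.cases ?_ ?_
    · simpa [hBh0] using hsum
    · intro i
      simpa [hBhs] using hsum2' i
  -- rewrite the sum over subsets as a sum over the attached type
  rw [← Finset.sum_attach (Finset.powersetCard (k + 1) (Finset.univ : Finset (Fin (n + 2))))
    (fun s => (∏ i ∈ s, α i) * deriv (fun t : ℝ => gramFace (fun i => A i t) s) t₀)]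
  have hsne : ∀ s : {x // x ∈ Finset.powersetCard (k+1) (Finset.univ : Finset (Fin (n+2)))},
      s.1.Nonempty := fun s =>
    Finset.card_pos.mp (by rw [(Finset.mem_powersetCard.mp s.2).2]; omega)
  -- the two Gram determinant functions
  set Fh : {x // x ∈ Finset.powersetCard (k+1) (Finset.univ : Finset (Fin (n+2)))} → ℝ → ℝ :=
    fun s t => (Matrix.of fun a b : ↥s.1 => ∑ x, Bh t x a.1 * Bh t x b.1).det with hFhdef
  set Ft : {x // x ∈ Finset.powersetCard (k+1) (Finset.univ : Finset (Fin (n+2)))} → ℝ → ℝ :=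
    fun s t => (Matrix.of fun a b : ↥s.1 => ∑ x, Bt t x a.1 * Bt t x b.1).det with hFtdef
  have step2 : ∀ s : {x // x ∈ Finset.powersetCard (k+1) (Finset.univ : Finset (Fin (n+2)))},
      (fun t : ℝ => gramFace (fun i => A i t) s.1) = fun t => Fh s t - Ft s t := by
    intro s
    funext t
    rw [GramAux.gramFace_eq (fun i => A i t) s.1 (hsne s), hFhdef, hFtdef]
    congr 1
    · refine congrArg Matrix.det ?_
      ext a b
      rw [Matrix.of_apply, Matrix.of_apply, Fin.sum_univ_succ]
      simp [hBh0, hBhs]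
    · refine congrArg Matrix.det ?_
      ext a b
      rw [Matrix.of_apply, Matrix.of_apply, Fin.sum_univ_succ]
      simp [hBt0, hBts]
  have hFh_diff : ∀ s, DifferentiableAt ℝ (Fh s) t₀ := by
    intro s
    refine GramAux.differentiableAt_det
      (fun t => Matrix.of fun a b : ↥s.1 => ∑ x, Bh t x a.1 * Bh t x b.1) ?_
    intro a b
    dsimp only [Matrix.of_apply]
    exact DifferentiableAt.fun_sum fun x _ =>
      ((hBhd x a.1).mul (hBhd x b.1)).differentiableAt
  have hFt_diff : ∀ s, DifferentiableAt ℝ (Ft s) t₀ := by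
    intro s
    refine GramAux.differentiableAt_det
      (fun t => Matrix.of fun a b : ↥s.1 => ∑ x, Bt t x a.1 * Bt t x b.1) ?_
    intro a b
    dsimp only [Matrix.of_apply]
    exact DifferentiableAt.fun_sum fun x _ =>
      ((hBtd x a.1).mul (hBtd x b.1)).differentiableAt
  -- the principal-minor functions of L̂ and L̃
  set Lh : {x // x ∈ Finset.powersetCard (k+1) (Finset.univ : Finset (Fin (n+1)))} → ℝ → ℝ :=
    fun r t => (Matrix.of fun a b : Fin (k+1) =>
      ∑ j, α j * Bh t (r.1.orderEmbOfFin (Finset.mem_powersetCard.mp r.2).2 a) j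
        * Bh t (r.1.orderEmbOfFin (Finset.mem_powersetCard.mp r.2).2 b) j).det with hLhdef
  set Lt : {x // x ∈ Finset.powersetCard (k+1) (Finset.univ : Finset (Fin (n+1)))} → ℝ → ℝ :=
    fun r t => (Matrix.of fun a b : Fin (k+1) =>
      ∑ j, α j * Bt t (r.1.orderEmbOfFin (Finset.mem_powersetCard.mp r.2).2 a) j
        * Bt t (r.1.orderEmbOfFin (Finset.mem_powersetCard.mp r.2).2 b) j).det with hLtdef
  have hLh_diff : ∀ r, DifferentiableAt ℝ (Lh r) t₀ := by
    intro r
    refine GramAux.differentiableAt_det _ ?_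
    intro a b
    dsimp only [Matrix.of_apply]
    exact DifferentiableAt.fun_sum fun j _ => (((hBhd _ j).const_mul (α j)).mul (hBhd _ j)).differentiableAt
  have hLt_diff : ∀ r, DifferentiableAt ℝ (Lt r) t₀ := by
    intro r
    refine GramAux.differentiableAt_det _ ?_
    intro a b
    dsimp only [Matrix.of_apply]
    exact DifferentiableAt.fun_sum fun j _ => (((hBtd _ j).const_mul (α j)).mul (hBtd _ j)).differentiableAt
  calc ∑ s ∈ (Finset.powersetCard (k + 1) (Finset.univ : Finset (Fin (n + 2)))).attach,
        (∏ i ∈ s.1, α i) * deriv (fun t : ℝ => gramFace (fun i => A i t) s.1) t₀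
      = ∑ s ∈ (Finset.powersetCard (k + 1) (Finset.univ : Finset (Fin (n + 2)))).attach,
        (∏ i ∈ s.1, α i) * deriv (fun t => Fh s t - Ft s t) t₀ := by
        refine Finset.sum_congr rfl fun s _ => ?_
        rw [step2 s]
    _ = ∑ s ∈ (Finset.powersetCard (k + 1) (Finset.univ : Finset (Fin (n + 2)))).attach,
        deriv (fun t => (∏ i ∈ s.1, α i) * (Fh s t - Ft s t)) t₀ := by
        refine Finset.sum_congr rfl fun s _ => ?_
        rw [deriv_const_mul_field]
    _ = deriv (fun t => ∑ s ∈ (Finset.powersetCard (k + 1) (Finset.univ : Finset (Fin (n + 2)))).attach,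
        (∏ i ∈ s.1, α i) * (Fh s t - Ft s t)) t₀ := by
        rw [deriv_fun_sum]
        intro s _
        exact ((hFh_diff s).sub (hFt_diff s)).const_mul _
    _ = deriv (fun t => ∑ r ∈ (Finset.powersetCard (k + 1) (Finset.univ : Finset (Fin (n + 1)))).attach,
        (Lh r t - Lt r t)) t₀ := by
        congr 1
        funext t
        simp only [mul_sub]
        rw [Finset.sum_sub_distrib, hFhdef, hFtdef,
          GramAux.key_identity α (Bh t), GramAux.key_identity α (Bt t),
          ← Finset.sum_sub_distrib]
    _ = ∑ r ∈ (Finset.powersetCard (k + 1) (Finset.univ : Finset (Fin (n + 1)))).attach,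
        deriv (fun t => Lh r t - Lt r t) t₀ := by
        refine deriv_fun_sum fun r _ => ?_
        exact (hLh_diff r).sub (hLt_diff r)
    _ = 0 := by
        refine Finset.sum_eq_zero fun r _ => ?_
        by_cases h0 : (0 : Fin (n+1)) ∈ r.1
        · -- the flattened minor vanishes identically; the hatted one has zero derivative
          obtain ⟨astar, hast⟩ : ∃ a : Fin (k+1),
              r.1.orderEmbOfFin (Finset.mem_powersetCard.mp r.2).2 a = 0 := by
            have hm : (0 : Fin (n+1)) ∈ Set.range (r.1.orderEmbOfFin (Finset.mem_powersetCard.mp r.2).2) := by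
              rw [Finset.range_orderEmbOfFin]; exact h0
            exact hm
          have htil : ∀ t, Lt r t = 0 := by
            intro t
            refine Matrix.det_eq_zero_of_row_eq_zero astar fun b => ?_
            dsimp only [Matrix.of_apply]
            rw [hast]
            refine Finset.sum_eq_zero fun j _ => ?_
            rw [hBt0]
            ring
          have hfun : (fun t => Lh r t - Lt r t) = fun t => Lh r t :=
            funext fun t => by rw [htil t, sub_zero]
          rw [hfun]
          refine HasDerivAt.deriv (GramAux.hasDerivAt_det_special
            (fun t => Matrix.of fun a b : Fin (k+1) =>
              ∑ j, α j * Bh t (r.1.orderEmbOfFin (Finset.mem_powersetCard.mp r.2).2 a) j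
                * Bh t (r.1.orderEmbOfFin (Finset.mem_powersetCard.mp r.2).2 b) j)
            (Matrix.of fun a b : Fin (k+1) => deriv (fun t =>
              ∑ j, α j * Bh t (r.1.orderEmbOfFin (Finset.mem_powersetCard.mp r.2).2 a) j
                * Bh t (r.1.orderEmbOfFin (Finset.mem_powersetCard.mp r.2).2 b) j) t₀)
            t₀ ?_ astar ?_ ?_ ?_)
          · intro i j
            refine DifferentiableAt.hasDerivAt ?_
            dsimp only [Matrix.of_apply]
            exact DifferentiableAt.fun_sum fun j' _ =>
              (((hBhd _ j').const_mul (α j')).mul (hBhd _ j')).differentiableAt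
          · intro b
            dsimp only [Matrix.of_apply]
            rw [hast]
            have he : ∀ j, α j * Bh t₀ 0 j
                * Bh t₀ (r.1.orderEmbOfFin (Finset.mem_powersetCard.mp r.2).2 b) j
                = α j * Bh t₀ (r.1.orderEmbOfFin (Finset.mem_powersetCard.mp r.2).2 b) j :=
              fun j => by rw [hBh0]; ring
            rw [Finset.sum_congr rfl fun j _ => he j]
            exact hval _
          · intro a
            dsimp only [Matrix.of_apply]
            rw [hast]
            have he : ∀ j, α j * Bh t₀ (r.1.orderEmbOfFin (Finset.mem_powersetCard.mp r.2).2 a) j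
                * Bh t₀ 0 j
                = α j * Bh t₀ (r.1.orderEmbOfFin (Finset.mem_powersetCard.mp r.2).2 a) j :=
              fun j => by rw [hBh0]; ring
            rw [Finset.sum_congr rfl fun j _ => he j]
            exact hval _
          · dsimp only [Matrix.of_apply]
            have he : (fun t => ∑ j, α j * Bh t (r.1.orderEmbOfFin (Finset.mem_powersetCard.mp r.2).2 astar) j
                * Bh t (r.1.orderEmbOfFin (Finset.mem_powersetCard.mp r.2).2 astar) j)
                = fun _ => (0:ℝ) := by
              funext t
              rw [hast]
              have he2 : ∀ j, α j * Bh t 0 j * Bh t 0 j = α j := fun j => by rw [hBh0]; ring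
              rw [Finset.sum_congr rfl fun j _ => he2 j]
              exact hsum
            rw [he, deriv_const]
        · -- away from the hat row the two matrices coincide
          have hne0 : ∀ a : Fin (k+1),
              r.1.orderEmbOfFin (Finset.mem_powersetCard.mp r.2).2 a ≠ 0 := by
            intro a ha
            exact h0 (ha ▸ Finset.orderEmbOfFin_mem r.1 (Finset.mem_powersetCard.mp r.2).2 a)
          have hBB : ∀ t j (a : Fin (k+1)),
              Bh t (r.1.orderEmbOfFin (Finset.mem_powersetCard.mp r.2).2 a) j
                = Bt t (r.1.orderEmbOfFin (Finset.mem_powersetCard.mp r.2).2 a) j := by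
            intro t j a
            rcases Fin.eq_zero_or_eq_succ (r.1.orderEmbOfFin (Finset.mem_powersetCard.mp r.2).2 a)
              with h | ⟨i, h⟩
            · exact absurd h (hne0 a)
            · rw [h, hBhs, hBts]
          have hz : (fun t => Lh r t - Lt r t) = fun _ => (0:ℝ) := by
            funext t
            have hm : (Matrix.of fun a b : Fin (k+1) =>
                ∑ j, α j * Bh t (r.1.orderEmbOfFin (Finset.mem_powersetCard.mp r.2).2 a) j
                  * Bh t (r.1.orderEmbOfFin (Finset.mem_powersetCard.mp r.2).2 b) j)
                = Matrix.of fun a b : Fin (k+1) =>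
                ∑ j, α j * Bt t (r.1.orderEmbOfFin (Finset.mem_powersetCard.mp r.2).2 a) j
                  * Bt t (r.1.orderEmbOfFin (Finset.mem_powersetCard.mp r.2).2 b) j := by
              ext a b
              dsimp only [Matrix.of_apply]
              exact Finset.sum_congr rfl fun j _ => by rw [hBB, hBB]
            rw [hLhdef, hLtdef]
            dsimp only
            rw [hm, sub_self]
          rw [hz, deriv_const]
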